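/- Let P(u,v) = (k₁·u^{β₁+β₂} + 2k₂·u^{β₁}·v^{β₂} + k₃·v^{β₁+β₂})^{δ/(β₁+β₂)} be a 2-input Kadiyala production function on (0,∞)² with parameters satisfying (★★). If δ = 1, then the Gaussian curvature of the graph surface {(u,v,P(u,v)) : u>0, v>0} vanishes at every point of (0,∞)², i.e., the Kadiyala surface is developable. -/

import Mathlib

open Real

/-- Partial derivative in the first variable. -/
noncomputable def pdu (f : ℝ → ℝ → ℝ) : ℝ → ℝ → ℝ := fun u v => deriv (fun x => f x v) u

/-- Partial derivative in the second variable. -/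
noncomputable def pdv (f : ℝ → ℝ → ℝ) : ℝ → ℝ → ℝ := fun u v => deriv (fun y => f u y) v

/-- Hessian determinant `f_uu · f_vv − f_uv²` of `f` at `(u, v)`. -/
noncomputable def hessDet (f : ℝ → ℝ → ℝ) (u v : ℝ) : ℝ :=
  pdu (pdu f) u v * pdv (pdv f) u v - pdv (pdu f) u v ^ 2

/-- Gaussian curvature of the graph surface `{(u, v, f u v)}` at `(u, v)`:
`K = (f_uu · f_vv − f_uv²) / (1 + f_u² + f_v²)²`. -/
noncomputable def gaussK (f : ℝ → ℝ → ℝ) (u v : ℝ) : ℝ :=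
  hessDet f u v / (1 + pdu f u v ^ 2 + pdv f u v ^ 2) ^ 2

/-- The 2-input Kadiyala production function
`P(u,v) = (k₁·u^(β₁+β₂) + 2k₂·u^β₁·v^β₂ + k₃·v^(β₁+β₂))^(δ/(β₁+β₂))`. -/
noncomputable def PKad (k₁ k₂ k₃ β₁ β₂ δ : ℝ) : ℝ → ℝ → ℝ := fun u v =>
  (k₁ * u ^ (β₁ + β₂) + 2 * k₂ * u ^ β₁ * v ^ β₂ + k₃ * v ^ (β₁ + β₂)) ^ (δ / (β₁ + β₂))

/-- If the Kadiyala production function has constant returns to scale (`δ = 1`), then the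
Kadiyala surface is developable: its Gaussian curvature vanishes at every point of `(0,∞)²`. -/
theorem kadiyala_constant_returns_developable
    (k₁ k₂ k₃ β₁ β₂ δ : ℝ)
    (hsum : k₁ + 2 * k₂ + k₃ = 1) (hk₁ : 0 ≤ k₁) (hk₂ : 0 ≤ k₂) (hk₃ : 0 ≤ k₃)
    (h12 : ¬(k₁ = 0 ∧ k₂ = 0)) (h23 : ¬(k₂ = 0 ∧ k₃ = 0))
    (hβ₁ : 0 < β₁ * (β₁ + β₂)) (hβ₂ : 0 < β₂ * (β₁ + β₂)) (hδ : 0 < δ) (hδ1 : δ = 1) :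
    ∀ u v : ℝ, 0 < u → 0 < v → gaussK (PKad k₁ k₂ k₃ β₁ β₂ δ) u v = 0 := by
  subst hδ1
  have hs : β₁ + β₂ ≠ 0 := by
    intro h; rw [h, mul_zero] at hβ₁; exact lt_irrefl 0 hβ₁
  set s := β₁ + β₂ with hsdef
  set φ : ℝ → ℝ := fun t => (k₁ * t ^ s + 2 * k₂ * t ^ β₁ + k₃) ^ (1 / s) with hφdef
  -- positivity of the inner expression
  have hpos : ∀ t : ℝ, 0 < t → 0 < k₁ * t ^ s + 2 * k₂ * t ^ β₁ + k₃ := by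
    intro t ht
    have h1 : 0 < t ^ s := Real.rpow_pos_of_pos ht s
    have h2 : 0 < t ^ β₁ := Real.rpow_pos_of_pos ht β₁
    rcases eq_or_lt_of_le hk₂ with h | h
    · have hk1 : 0 < k₁ := by
        rcases eq_or_lt_of_le hk₁ with h' | h'
        · exact absurd ⟨h'.symm, h.symm⟩ h12
        · exact h'
      nlinarith
    · nlinarith
  -- P = v * φ (u / v) on the positive quadrant
  have hP : ∀ x y : ℝ, 0 < x → 0 < y →
      PKad k₁ k₂ k₃ β₁ β₂ 1 x y = y * φ (x / y) := by
    intro x y hx hy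
    have hxy : 0 < x / y := div_pos hx hy
    have hys : (0:ℝ) < y ^ s := Real.rpow_pos_of_pos hy s
    have key : k₁ * (x/y) ^ s + 2 * k₂ * (x/y) ^ β₁ + k₃
        = (k₁ * x ^ s + 2 * k₂ * x ^ β₁ * y ^ β₂ + k₃ * y ^ s) / y ^ s := by
      rw [Real.div_rpow hx.le hy.le, Real.div_rpow hx.le hy.le,
        show s = β₁ + β₂ from rfl, Real.rpow_add hy β₁ β₂]
      have hyb : (0:ℝ) < y ^ β₁ := Real.rpow_pos_of_pos hy β₁
      have hyb2 : (0:ℝ) < y ^ β₂ := Real.rpow_pos_of_pos hy β₂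
      field_simp
    have hN : 0 ≤ k₁ * x ^ s + 2 * k₂ * x ^ β₁ * y ^ β₂ + k₃ * y ^ s := by
      have h := hpos (x/y) hxy
      rw [key] at h
      have h2 := mul_pos h hys
      rw [div_mul_cancel₀ _ hys.ne'] at h2
      exact h2.le
    have hyss : (y ^ s) ^ (1/s) = y := by
      rw [← Real.rpow_mul hy.le, mul_one_div_cancel hs, Real.rpow_one]
    have hφval : φ (x/y) = (k₁ * x ^ s + 2 * k₂ * x ^ β₁ * y ^ β₂ + k₃ * y ^ s) ^ (1/s) / y := by
      show (k₁ * (x/y) ^ s + 2 * k₂ * (x/y) ^ β₁ + k₃) ^ (1 / s) = _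
      rw [key, Real.div_rpow hN hys.le, hyss]
    rw [PKad]
    simp only [← hsdef]
    rw [hφval, mul_comm y _, div_mul_cancel₀ _ hy.ne']
  -- smoothness of φ on (0,∞)
  have hφC : ContDiffOn ℝ 2 φ (Set.Ioi 0) := by
    intro t ht
    have ht0 : (0:ℝ) < t := ht
    have ht' : (t:ℝ) ≠ 0 := ne_of_gt ht0
    have hA : ContDiffAt ℝ 2 (fun t : ℝ => t ^ s) t := Real.contDiffAt_rpow_const_of_ne ht'
    have hB : ContDiffAt ℝ 2 (fun t : ℝ => t ^ β₁) t := Real.contDiffAt_rpow_const_of_ne ht'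
    have hg : ContDiffAt ℝ 2 (fun t : ℝ => k₁ * t ^ s + 2 * k₂ * t ^ β₁ + k₃) t :=
      ((contDiffAt_const.mul hA).add (contDiffAt_const.mul hB)).add contDiffAt_const
    exact (hg.rpow_const_of_ne (ne_of_gt (hpos t ht0))).contDiffWithinAt
  have hφdiff : ∀ t : ℝ, 0 < t → HasDerivAt φ (deriv φ t) t := by
    intro t ht
    exact (((hφC.differentiableOn (by norm_num)) t ht).differentiableAt
      (isOpen_Ioi.mem_nhds ht)).hasDerivAt
  have hψC : ContDiffOn ℝ 1 (deriv φ) (Set.Ioi 0) :=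
    hφC.deriv_of_isOpen isOpen_Ioi (by norm_num)
  have hψdiff : ∀ t : ℝ, 0 < t → HasDerivAt (deriv φ) (deriv (deriv φ) t) t := by
    intro t ht
    exact (((hψC.differentiableOn (by norm_num)) t ht).differentiableAt
      (isOpen_Ioi.mem_nhds ht)).hasDerivAt
  -- first partial derivatives
  have hPu : ∀ x y : ℝ, 0 < x → 0 < y →
      pdu (PKad k₁ k₂ k₃ β₁ β₂ 1) x y = deriv φ (x / y) := by
    intro x y hx hy
    have heq : (fun x' => PKad k₁ k₂ k₃ β₁ β₂ 1 x' y) =ᶠ[nhds x] (fun x' => y * φ (x' / y)) :=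
      Filter.eventually_of_mem (isOpen_Ioi.mem_nhds hx) (fun x' hx' => hP x' y hx' hy)
    have h1 : HasDerivAt (fun x' : ℝ => x' / y) (1 / y) x := by
      simpa using (hasDerivAt_id x).div_const y
    have h2 := ((hφdiff (x/y) (div_pos hx hy)).comp x h1).const_mul y
    have h3 : HasDerivAt (fun x' => y * φ (x' / y)) (deriv φ (x/y)) x := by
      refine h2.congr_deriv ?_
      field_simp
    rw [pdu, heq.deriv_eq, h3.deriv]
  have hPv : ∀ x y : ℝ, 0 < x → 0 < y →
      pdv (PKad k₁ k₂ k₃ β₁ β₂ 1) x y = φ (x/y) - (x/y) * deriv φ (x/y) := by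
    intro x y hx hy
    have heq : (fun y' => PKad k₁ k₂ k₃ β₁ β₂ 1 x y') =ᶠ[nhds y] (fun y' => y' * φ (x / y')) :=
      Filter.eventually_of_mem (isOpen_Ioi.mem_nhds hy) (fun y' hy' => hP x y' hx hy')
    have h1 : HasDerivAt (fun y' : ℝ => x / y') (-(x / y ^ 2)) y := by
      have := (hasDerivAt_const y x).div (hasDerivAt_id y) hy.ne'
      refine this.congr_deriv ?_
      simp only [Function.comp_apply, id_eq]
      field_simp
      ring
    have h2 := ((hφdiff (x/y) (div_pos hx hy)).comp y h1)
    have h3 := (hasDerivAt_id y).mul h2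
    have h4 : HasDerivAt (fun y' => y' * φ (x / y'))
        (φ (x/y) - (x/y) * deriv φ (x/y)) y := by
      refine h3.congr_deriv ?_
      simp only [Function.comp_apply, id_eq]
      field_simp
      ring
    rw [pdv, heq.deriv_eq, h4.deriv]
  -- now fix the point
  intro u v hu hv
  have ht : 0 < u / v := div_pos hu hv
  -- second partials
  have huu : pdu (pdu (PKad k₁ k₂ k₃ β₁ β₂ 1)) u v = deriv (deriv φ) (u/v) * (1/v) := by
    have heq : (fun x => pdu (PKad k₁ k₂ k₃ β₁ β₂ 1) x v) =ᶠ[nhds u]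
        (fun x => deriv φ (x / v)) :=
      Filter.eventually_of_mem (isOpen_Ioi.mem_nhds hu) (fun x hx => hPu x v hx hv)
    have h1 : HasDerivAt (fun x : ℝ => x / v) (1 / v) u := by
      simpa using (hasDerivAt_id u).div_const v
    have h2 := (hψdiff (u/v) ht).comp u h1
    have h3 : HasDerivAt (fun x => deriv φ (x / v)) (deriv (deriv φ) (u/v) * (1/v)) u := h2
    rw [pdu, heq.deriv_eq, h3.deriv]
  have huv : pdv (pdu (PKad k₁ k₂ k₃ β₁ β₂ 1)) u v
      = deriv (deriv φ) (u/v) * (-(u / v ^ 2)) := by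
    have heq : (fun y => pdu (PKad k₁ k₂ k₃ β₁ β₂ 1) u y) =ᶠ[nhds v]
        (fun y => deriv φ (u / y)) :=
      Filter.eventually_of_mem (isOpen_Ioi.mem_nhds hv) (fun y hy => hPu u y hu hy)
    have h1 : HasDerivAt (fun y : ℝ => u / y) (-(u / v ^ 2)) v := by
      have := (hasDerivAt_const v u).div (hasDerivAt_id v) hv.ne'
      refine this.congr_deriv ?_
      simp only [Function.comp_apply, id_eq]
      field_simp
      ring
    have h2 := (hψdiff (u/v) ht).comp v h1
    have h3 : HasDerivAt (fun y => deriv φ (u / y)) (deriv (deriv φ) (u/v) * (-(u / v ^ 2))) v := h2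
    rw [pdv, heq.deriv_eq, h3.deriv]
  have hvv : pdv (pdv (PKad k₁ k₂ k₃ β₁ β₂ 1)) u v
      = u ^ 2 / v ^ 3 * deriv (deriv φ) (u/v) := by
    have heq : (fun y => pdv (PKad k₁ k₂ k₃ β₁ β₂ 1) u y) =ᶠ[nhds v]
        (fun y => φ (u / y) - (u / y) * deriv φ (u / y)) :=
      Filter.eventually_of_mem (isOpen_Ioi.mem_nhds hv) (fun y hy => hPv u y hu hy)
    have h1 : HasDerivAt (fun y : ℝ => u / y) (-(u / v ^ 2)) v := by
      have := (hasDerivAt_const v u).div (hasDerivAt_id v) hv.ne'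
      refine this.congr_deriv ?_
      simp only [Function.comp_apply, id_eq]
      field_simp
      ring
    have h2 := (hφdiff (u/v) ht).comp v h1
    have h3 := (hψdiff (u/v) ht).comp v h1
    have h4 := h2.sub (h1.mul h3)
    have h5 : HasDerivAt (fun y => φ (u / y) - (u / y) * deriv φ (u / y))
        (u ^ 2 / v ^ 3 * deriv (deriv φ) (u/v)) v := by
      refine h4.congr_deriv ?_
      simp only [Function.comp_apply, id_eq]
      field_simp
      ring
    rw [pdv, heq.deriv_eq, h5.deriv]
  have hhd : hessDet (PKad k₁ k₂ k₃ β₁ β₂ 1) u v = 0 := by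
    rw [hessDet, huu, huv, hvv]
    field_simp
    ring
  rw [gaussK, hhd, zero_div]
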